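/- Let T = {p ∈ ℝ³ : the maximum of ℓ₁(p),…,ℓ₅(p) is attained by at least two of the five functions}. Then T = σ₁ ∪ σ₂ ∪ σ₃ ∪ σ₄ ∪ σ₅ ∪ σ₆ ∪ σ₇ ∪ σ₈ ∪ σ₉; that is, the tropical hypersurface of the re-embedding polynomial z − (y − a₁x − a₂x² − a₃x³) consists exactly of the nine cells σ₁,…,σ₉ listed in the paper. -/
import Mathlib


/-- The five affine functions on `ℝ³` (coordinates `(X, Y, Z)`, encoded as `(p.1, p.2.1, p.2.2)`)
arising as the (max-convention) tropicalizations of the terms of the re-embedding polynomial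
`z − (y − a₁x − a₂x² − a₃x³)`, where `A = val a₁`, `B = val a₂`, `C = val a₃`:
`ℓ₁ = Z`, `ℓ₂ = Y`, `ℓ₃ = X + A`, `ℓ₄ = 2X + B`, `ℓ₅ = 3X + C`. -/
noncomputable def tropTerm (A B C : ℝ) : Fin 5 → (ℝ × ℝ × ℝ) → ℝ :=
  ![fun p => p.2.2, fun p => p.2.1, fun p => p.1 + A,
    fun p => 2 * p.1 + B, fun p => 3 * p.1 + C]

/-- The nine cells `σ₁, …, σ₉` of the tropical hypersurface of the re-embedding polynomial. -/
noncomputable def sigmaCell (A B C : ℝ) : Fin 9 → Set (ℝ × ℝ × ℝ) :=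
  ![{p | p.2.2 = p.1 + A ∧ p.2.1 ≤ p.2.2 ∧ p.1 ≤ A - B},
    {p | p.2.2 = 2 * p.1 + B ∧ p.2.1 ≤ p.2.2 ∧ A - B ≤ p.1 ∧ p.1 ≤ B - C},
    {p | p.2.2 = 3 * p.1 + C ∧ p.2.1 ≤ p.2.2 ∧ B - C ≤ p.1},
    {p | p.1 = A - B ∧ p.2.2 ≤ 2 * A - B ∧ p.2.1 ≤ 2 * A - B},
    {p | p.1 = B - C ∧ p.2.2 ≤ 3 * B - 2 * C ∧ p.2.1 ≤ 3 * B - 2 * C},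
    {p | p.2.1 = p.1 + A ∧ p.2.2 ≤ p.2.1 ∧ p.1 ≤ A - B},
    {p | p.2.1 = 2 * p.1 + B ∧ p.2.2 ≤ p.2.1 ∧ A - B ≤ p.1 ∧ p.1 ≤ B - C},
    {p | p.2.1 = 3 * p.1 + C ∧ p.2.2 ≤ p.2.1 ∧ B - C ≤ p.1},
    {p | p.2.2 = p.2.1 ∧ p.1 + A ≤ p.2.2 ∧ 2 * p.1 + B ≤ p.2.2 ∧ 3 * p.1 + C ≤ p.2.2}]

set_option maxHeartbeats 2000000 in
/-- The tropical hypersurface of the re-embedding polynomial `z − (y − a₁x − a₂x² − a₃x³)`,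
i.e. the locus where the maximum of the five tropical terms is attained at least twice,
is exactly the union of the nine cells `σ₁, …, σ₉`. -/
theorem tropical_hypersurface_eq_union_nine_cells (A B C : ℝ) (hABC : A - B < B - C) :
    {p : ℝ × ℝ × ℝ | ∃ i j : Fin 5, i ≠ j ∧
        (∀ k : Fin 5, tropTerm A B C k p ≤ tropTerm A B C i p) ∧
        tropTerm A B C j p = tropTerm A B C i p} =
      ⋃ i : Fin 9, sigmaCell A B C i := by
  have c0 : ∀ q : ℝ × ℝ × ℝ, q.2.2 = q.1 + A → q.2.1 ≤ q.2.2 → q.1 ≤ A - B →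
      q ∈ sigmaCell A B C 0 := fun q h1 h2 h3 => ⟨h1, h2, h3⟩
  have c1 : ∀ q : ℝ × ℝ × ℝ, q.2.2 = 2 * q.1 + B → q.2.1 ≤ q.2.2 → A - B ≤ q.1 →
      q.1 ≤ B - C → q ∈ sigmaCell A B C 1 := fun q h1 h2 h3 h4 => ⟨h1, h2, h3, h4⟩
  have c2 : ∀ q : ℝ × ℝ × ℝ, q.2.2 = 3 * q.1 + C → q.2.1 ≤ q.2.2 → B - C ≤ q.1 →
      q ∈ sigmaCell A B C 2 := fun q h1 h2 h3 => ⟨h1, h2, h3⟩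
  have c3 : ∀ q : ℝ × ℝ × ℝ, q.1 = A - B → q.2.2 ≤ 2 * A - B → q.2.1 ≤ 2 * A - B →
      q ∈ sigmaCell A B C 3 := fun q h1 h2 h3 => ⟨h1, h2, h3⟩
  have c4 : ∀ q : ℝ × ℝ × ℝ, q.1 = B - C → q.2.2 ≤ 3 * B - 2 * C → q.2.1 ≤ 3 * B - 2 * C →
      q ∈ sigmaCell A B C 4 := fun q h1 h2 h3 => ⟨h1, h2, h3⟩
  have c5 : ∀ q : ℝ × ℝ × ℝ, q.2.1 = q.1 + A → q.2.2 ≤ q.2.1 → q.1 ≤ A - B →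
      q ∈ sigmaCell A B C 5 := fun q h1 h2 h3 => ⟨h1, h2, h3⟩
  have c6 : ∀ q : ℝ × ℝ × ℝ, q.2.1 = 2 * q.1 + B → q.2.2 ≤ q.2.1 → A - B ≤ q.1 →
      q.1 ≤ B - C → q ∈ sigmaCell A B C 6 := fun q h1 h2 h3 h4 => ⟨h1, h2, h3, h4⟩
  have c7 : ∀ q : ℝ × ℝ × ℝ, q.2.1 = 3 * q.1 + C → q.2.2 ≤ q.2.1 → B - C ≤ q.1 →
      q ∈ sigmaCell A B C 7 := fun q h1 h2 h3 => ⟨h1, h2, h3⟩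
  have c8 : ∀ q : ℝ × ℝ × ℝ, q.2.2 = q.2.1 → q.1 + A ≤ q.2.2 → 2 * q.1 + B ≤ q.2.2 →
      3 * q.1 + C ≤ q.2.2 → q ∈ sigmaCell A B C 8 := fun q h1 h2 h3 h4 => ⟨h1, h2, h3, h4⟩
  ext p
  simp only [Set.mem_setOf_eq, Set.mem_iUnion]
  constructor
  · rintro ⟨i, j, hij, hmax, heq⟩
    have h0 := hmax 0
    have h1 := hmax 1
    have h2 := hmax 2
    have h3 := hmax 3
    have h4 := hmax 4
    fin_cases i <;> fin_cases j <;>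
      simp [tropTerm] at h0 h1 h2 h3 h4 heq <;>
      first
      | exact absurd rfl hij
      | exact ⟨0, c0 p (by linarith) (by linarith) (by linarith)⟩
      | exact ⟨1, c1 p (by linarith) (by linarith) (by linarith) (by linarith)⟩
      | exact ⟨2, c2 p (by linarith) (by linarith) (by linarith)⟩
      | exact ⟨3, c3 p (by linarith) (by linarith) (by linarith)⟩
      | exact ⟨4, c4 p (by linarith) (by linarith) (by linarith)⟩
      | exact ⟨5, c5 p (by linarith) (by linarith) (by linarith)⟩
      | exact ⟨6, c6 p (by linarith) (by linarith) (by linarith) (by linarith)⟩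
      | exact ⟨7, c7 p (by linarith) (by linarith) (by linarith)⟩
      | exact ⟨8, c8 p (by linarith) (by linarith) (by linarith) (by linarith)⟩
  · rintro ⟨k, hk⟩
    fin_cases k
    · obtain ⟨h1, h2, h3⟩ := hk
      refine ⟨0, 2, by decide, fun m => ?_, ?_⟩ <;>
        [skip; simp [tropTerm]] <;> [fin_cases m <;> simp [tropTerm] <;> linarith; linarith]
    · obtain ⟨h1, h2, h3, h4⟩ := hk
      refine ⟨0, 3, by decide, fun m => ?_, ?_⟩ <;>
        [skip; simp [tropTerm]] <;> [fin_cases m <;> simp [tropTerm] <;> linarith; linarith]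
    · obtain ⟨h1, h2, h3⟩ := hk
      refine ⟨0, 4, by decide, fun m => ?_, ?_⟩ <;>
        [skip; simp [tropTerm]] <;> [fin_cases m <;> simp [tropTerm] <;> linarith; linarith]
    · obtain ⟨h1, h2, h3⟩ := hk
      refine ⟨2, 3, by decide, fun m => ?_, ?_⟩ <;>
        [skip; simp [tropTerm]] <;> [fin_cases m <;> simp [tropTerm] <;> linarith; linarith]
    · obtain ⟨h1, h2, h3⟩ := hk
      refine ⟨3, 4, by decide, fun m => ?_, ?_⟩ <;>
        [skip; simp [tropTerm]] <;> [fin_cases m <;> simp [tropTerm] <;> linarith; linarith]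
    · obtain ⟨h1, h2, h3⟩ := hk
      refine ⟨1, 2, by decide, fun m => ?_, ?_⟩ <;>
        [skip; simp [tropTerm]] <;> [fin_cases m <;> simp [tropTerm] <;> linarith; linarith]
    · obtain ⟨h1, h2, h3, h4⟩ := hk
      refine ⟨1, 3, by decide, fun m => ?_, ?_⟩ <;>
        [skip; simp [tropTerm]] <;> [fin_cases m <;> simp [tropTerm] <;> linarith; linarith]
    · obtain ⟨h1, h2, h3⟩ := hk
      refine ⟨1, 4, by decide, fun m => ?_, ?_⟩ <;>
        [skip; simp [tropTerm]] <;> [fin_cases m <;> simp [tropTerm] <;> linarith; linarith]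
    · obtain ⟨h1, h2, h3, h4⟩ := hk
      refine ⟨0, 1, by decide, fun m => ?_, ?_⟩ <;>
        [skip; simp [tropTerm]] <;> [fin_cases m <;> simp [tropTerm] <;> linarith; linarith]
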